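/- Let M have the property 𝕄. If φ : A → M is linear and A∘φ(B) = 0 whenever A∘B = 0, then φ(A) = φ(I)A = Aφ(I) for every A ∈ A. -/
import Mathlib


open MulOpposite

/-- Let `M` have property `𝕄`. If `A∘φ(B) = 0` whenever `A∘B = 0`, then
`φ(A) = φ(I)A = A φ(I)` for every `A`. -/
theorem stmt18 {A : Type*} {M : Type*}
    [Ring A] [Algebra ℂ A]
    [AddCommGroup M] [Module ℂ M] [Module A M] [Module Aᵐᵒᵖ M]
    [SMulCommClass A Aᵐᵒᵖ M] [IsScalarTower ℂ A M] [IsScalarTower ℂ Aᵐᵒᵖ M]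
    (J : Set A)
    (hJsub : ∀ x ∈ J, x ∈ Algebra.adjoin ℂ {e : A | IsIdempotentElem e})
    (hJadd : ∀ x ∈ J, ∀ y ∈ J, x + y ∈ J)
    (hJl : ∀ (a : A), ∀ x ∈ J, a * x ∈ J)
    (hJr : ∀ (a : A), ∀ x ∈ J, x * a ∈ J)
    (hM : ∀ m : M, (∀ x ∈ J, op x • (x • m) = 0) → m = 0)
    (φ : A →ₗ[ℂ] M)
    (h : ∀ a b : A, a * b + b * a = 0 → a • φ b + op a • φ b = 0) :
    ∀ a : A, φ a = op a • φ 1 ∧ φ a = a • φ 1 := by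
  -- cancel doubling
  have half : ∀ x y : M, x + x = y + y → x = y := by
    intro x y hxy
    have h2 : (2:ℂ) • x = (2:ℂ) • y := by rw [two_smul, two_smul]; exact hxy
    have h3 := congrArg (fun z : M => (2:ℂ)⁻¹ • z) h2
    simpa [smul_smul, show ((2:ℂ)⁻¹ * 2) = 1 by norm_num] using h3
  have cancel4 : ∀ u v s t : M, (u - s) + (v - t) = 0 → u + v = s + t := by
    intro u v s t h0
    have h1 : (u + v) - (s + t) = 0 := by
      calc (u + v) - (s + t) = (u - s) + (v - t) := by abel
        _ = 0 := h0
    exact sub_eq_zero.mp h1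
  -- For idempotent p : 2 φ p = p φ1 + φ1 p
  have hA1 : ∀ p : A, p * p = p → φ p + φ p = p • φ 1 + op p • φ 1 := by
    intro p hp
    have e1 := h p (1 - p) (by simp [mul_sub, sub_mul, hp])
    have e2 := h (1 - p) p (by simp [mul_sub, sub_mul, hp])
    rw [map_sub] at e1
    have e1' : p • φ 1 + op p • φ 1 = p • φ p + op p • φ p := by
      apply cancel4
      simpa [smul_sub] using e1
    have e2' : φ p + φ p = p • φ p + op p • φ p := by
      apply cancel4
      simpa [sub_smul, op_sub, op_one] using e2
    rw [e2', e1']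
  -- If p b = b = b p with p idempotent then p • φ b = φ b = φ b • p
  have hB : ∀ p b : A, p * p = p → p * b = b → b * p = b →
      p • φ b = φ b ∧ op p • φ b = φ b := by
    intro p b hp hpb hbp
    have e2 := h (1 - p) b (by simp [mul_sub, sub_mul, hpb, hbp])
    have e2' : φ b + φ b = p • φ b + op p • φ b := by
      apply cancel4
      simpa [sub_smul, op_sub, op_one] using e2
    have w1 := congrArg (fun m : M => p • m) e2'
    have w2 := congrArg (fun m : M => op p • m) e2'
    simp only [smul_add] at w1 w2
    rw [smul_smul p p, hp, smul_comm p (op p)] at w1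
    -- w1 : p • φ b + p • φ b = p • φ b + op p • (p • φ b)
    have hu : p • φ b = op p • (p • φ b) := add_left_cancel w1
    rw [smul_smul (op p) (op p), ← op_mul, hp] at w2
    -- w2 : op p • φ b + op p • φ b = op p • (p • φ b) + op p • φ b
    have hv : op p • φ b = op p • (p • φ b) := add_right_cancel w2
    have hw : φ b = op p • (p • φ b) := by
      apply half
      rw [e2']
      exact congrArg₂ (· + ·) hu hv
    exact ⟨hu.trans hw.symm, hv.trans hw.symm⟩
  -- φ1 commutes with idempotents
  have hC : ∀ p : A, p * p = p → p • φ 1 = op p • φ 1 := by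
    intro p hp
    obtain ⟨hu, hv⟩ := hB p p hp hp hp
    have α := hA1 p hp
    have α1 := congrArg (fun m : M => p • m) α
    have α2 := congrArg (fun m : M => op p • m) α
    simp only [smul_add] at α1 α2
    rw [smul_smul p p, hp, hu] at α1
    rw [smul_smul (op p) (op p), ← op_mul, hp, hv] at α2
    rw [smul_comm p (op p)] at α1
    have hcomb := α1.symm.trans α2
    -- hcomb : p • φ 1 + op p • (p • φ 1) = op p • (p • φ 1) + op p • φ 1
    rw [add_comm (op p • (p • φ 1))] at hcomb
    exact add_right_cancel hcomb
  -- If p b = 0 = b p with p idempotent then p • φ b = 0 = φ b • p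
  have hE : ∀ p b : A, p * p = p → p * b = 0 → b * p = 0 →
      p • φ b = 0 ∧ op p • φ b = 0 := by
    intro p b hp h1 h2
    have e := h p b (by rw [h1, h2, add_zero])
    have w1 := congrArg (fun m : M => p • m) e
    have w2 := congrArg (fun m : M => op p • m) e
    simp only [smul_add, smul_zero] at w1 w2
    rw [smul_smul p p, hp, smul_comm p (op p)] at w1
    -- w1 : p • φ b + op p • (p • φ b) = 0
    rw [smul_smul (op p) (op p), ← op_mul, hp] at w2
    -- w2 : op p • (p • φ b) + op p • φ b = 0
    -- e : p • φ b + op p • φ b = 0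
    have hWv : op p • (p • φ b) = op p • φ b := add_left_cancel (w1.trans e.symm)
    have hv0 : op p • φ b = 0 := by
      apply half
      rw [hWv] at w2
      simpa using w2
    have hu0 : p • φ b = 0 := by
      rw [hv0, add_zero] at e
      exact e
    exact ⟨hu0, hv0⟩
  -- corner formula
  have hN : ∀ p n : A, (p + n) * (p + n) = p + n → p * p = p →
      φ n + φ n = n • φ 1 + op n • φ 1 := by
    intro p n hq hp
    have k1 := hA1 (p + n) hq
    have k2 := hA1 p hp
    rw [map_add, add_smul, op_add, add_smul] at k1
    calc φ n + φ n = ((φ p + φ n) + (φ p + φ n)) - (φ p + φ p) := by abel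
      _ = ((p • φ 1 + n • φ 1) + (op p • φ 1 + op n • φ 1)) - (p • φ 1 + op p • φ 1) := by
          rw [k1, k2]
      _ = n • φ 1 + op n • φ 1 := by abel
  have hcorner12 : ∀ p n : A, p * p = p → p * n = n → n * p = 0 →
      p • φ n = φ n ∧ op p • φ n = 0 := by
    intro p n hp hpn hnp
    have hnn : n * n = 0 := by nth_rewrite 2 [← hpn]; rw [← mul_assoc, hnp, zero_mul]
    have hq : (p + n) * (p + n) = p + n := by
      simp [mul_add, add_mul, hp, hpn, hnp, hnn]
    have dn := hN p n hq hp
    constructor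
    · apply half
      have t := congrArg (fun m : M => p • m) dn
      simp only [smul_add] at t
      rw [smul_smul p n, hpn, smul_comm p (op n), hC p hp,
        smul_smul (op n) (op p), ← op_mul, hpn] at t
      rw [t, ← dn]
    · apply half
      have s := congrArg (fun m : M => op p • m) dn
      simp only [smul_add] at s
      rw [← smul_comm n (op p), ← hC p hp, smul_smul n p, hnp, zero_smul,
        smul_smul (op p) (op n), ← op_mul, hnp, op_zero, zero_smul] at s
      simpa using s
  have hcorner21 : ∀ p n : A, p * p = p → n * p = n → p * n = 0 →
      p • φ n = 0 ∧ op p • φ n = φ n := by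
    intro p n hp hnp hpn
    have hnn : n * n = 0 := by nth_rewrite 1 [← hnp]; rw [mul_assoc, hpn, mul_zero]
    have hq : (p + n) * (p + n) = p + n := by
      simp [mul_add, add_mul, hp, hpn, hnp, hnn]
    have dn := hN p n hq hp
    constructor
    · apply half
      have t := congrArg (fun m : M => p • m) dn
      simp only [smul_add] at t
      rw [smul_smul p n, hpn, zero_smul, smul_comm p (op n), hC p hp,
        smul_smul (op n) (op p), ← op_mul, hpn, op_zero, zero_smul] at t
      simpa using t
    · apply half
      have s := congrArg (fun m : M => op p • m) dn
      simp only [smul_add] at s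
      rw [← smul_comm n (op p), ← hC p hp, smul_smul n p, hnp,
        smul_smul (op p) (op n), ← op_mul, hnp] at s
      rw [s, ← dn]
  -- the key module-map property at idempotents
  have hL : ∀ p : A, p * p = p → ∀ a : A, p • φ a = φ (p * a) ∧ op p • φ a = φ (a * p) := by
    intro p hp a
    have hd : a = p*a*p + (p*a - p*a*p) + (a*p - p*a*p) + (a - p*a - a*p + p*a*p) := by abel
    have hφd : φ a = φ (p*a*p) + φ (p*a - p*a*p) + φ (a*p - p*a*p)
        + φ (a - p*a - a*p + p*a*p) := by
      conv_lhs => rw [hd]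
      simp only [map_add]
    obtain ⟨c11l, c11r⟩ := hB p (p*a*p) hp
      (by simp only [← mul_assoc, hp]) (by simp only [mul_assoc, hp])
    obtain ⟨c12l, c12r⟩ := hcorner12 p (p*a - p*a*p) hp
      (by simp only [mul_sub, ← mul_assoc, hp])
      (by simp only [sub_mul, mul_assoc, hp, sub_self])
    obtain ⟨c21l, c21r⟩ := hcorner21 p (a*p - p*a*p) hp
      (by simp only [sub_mul, mul_assoc, hp])
      (by simp only [mul_sub, ← mul_assoc, hp, sub_self])
    obtain ⟨c22l, c22r⟩ := hE p (a - p*a - a*p + p*a*p) hp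
      (by simp only [mul_sub, mul_add, ← mul_assoc, hp]; abel)
      (by simp only [sub_mul, add_mul, mul_assoc, hp]; abel)
    constructor
    · calc p • φ a = p • φ (p*a*p) + p • φ (p*a - p*a*p) + p • φ (a*p - p*a*p)
            + p • φ (a - p*a - a*p + p*a*p) := by rw [hφd]; simp only [smul_add]
        _ = φ (p*a*p) + φ (p*a - p*a*p) := by rw [c11l, c12l, c21l, c22l, add_zero, add_zero]
        _ = φ (p*a*p + (p*a - p*a*p)) := (map_add φ _ _).symm
        _ = φ (p * a) := by rw [show p*a*p + (p*a - p*a*p) = p*a from by abel]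
    · calc op p • φ a = op p • φ (p*a*p) + op p • φ (p*a - p*a*p) + op p • φ (a*p - p*a*p)
            + op p • φ (a - p*a - a*p + p*a*p) := by rw [hφd]; simp only [smul_add]
        _ = φ (p*a*p) + φ (a*p - p*a*p) := by
            rw [c11r, c12r, c21r, c22r, add_zero, add_zero]
        _ = φ (p*a*p + (a*p - p*a*p)) := (map_add φ _ _).symm
        _ = φ (a * p) := by rw [show p*a*p + (a*p - p*a*p) = a*p from by abel]
  -- extend to the subalgebra generated by idempotents
  have hAdj : ∀ x ∈ Algebra.adjoin ℂ {e : A | IsIdempotentElem e},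
      ∀ a : A, x • φ a = φ (x * a) ∧ op x • φ a = φ (a * x) := by
    intro x hx
    refine Algebra.adjoin_induction
      (p := fun x _ => ∀ a : A, x • φ a = φ (x * a) ∧ op x • φ a = φ (a * x))
      ?_ ?_ ?_ ?_ hx
    · intro e he a
      exact hL e he a
    · intro r a
      constructor
      · rw [algebraMap_smul, ← map_smul, Algebra.smul_def]
      · rw [← MulOpposite.algebraMap_apply, algebraMap_smul, ← map_smul,
          Algebra.smul_def, Algebra.commutes]
    · intro x y hx' hy' ihx ihy a
      constructor
      · rw [add_smul, (ihx a).1, (ihy a).1, ← map_add, add_mul]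
      · rw [op_add, add_smul, (ihx a).2, (ihy a).2, ← map_add, mul_add]
    · intro x y hx' hy' ihx ihy a
      constructor
      · rw [mul_smul, (ihy a).1, (ihx (y * a)).1, mul_assoc]
      · rw [op_mul, mul_smul, (ihx a).2, (ihy (a * x)).2, mul_assoc]
  -- finish via property 𝕄
  intro a
  have main : ∀ x ∈ J, op x • (x • φ a) = φ (x * a * x)
      ∧ op x • (x • (op a • φ 1)) = φ (x * a * x)
      ∧ op x • (x • (a • φ 1)) = φ (x * a * x) := by
    intro x hx
    have hxA := hJsub x hx
    have hx1 := hAdj x hxA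
    have hyA := hAdj (x * a * x) (hJsub _ (hJl (x * a) x hx))
    have hxφ : x • φ 1 = op x • φ 1 := by
      have h1 := (hx1 1).1
      have h2 := (hx1 1).2
      rw [mul_one] at h1
      rw [one_mul] at h2
      rw [h1, h2]
    have hy1 : op (x * a * x) • φ 1 = φ (x * a * x) := by
      have := (hyA 1).2
      rwa [one_mul] at this
    have hy2 : (x * a * x) • φ 1 = φ (x * a * x) := by
      have := (hyA 1).1
      rwa [mul_one] at this
    refine ⟨?_, ?_, ?_⟩
    · rw [(hx1 a).1, (hx1 (x * a)).2]
    · rw [smul_comm x (op a), hxφ, smul_smul (op a) (op x), ← op_mul,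
        smul_smul (op x) (op (x * a)), ← op_mul]
      exact hy1
    · rw [smul_smul x a, ← smul_comm (x * a) (op x), ← hxφ,
        smul_smul (x * a) x]
      exact hy2
  constructor
  · have hz : φ a - op a • φ 1 = 0 := by
      apply hM
      intro x hx
      obtain ⟨m1, m2, _⟩ := main x hx
      rw [smul_sub, smul_sub, m1, m2, sub_self]
    exact sub_eq_zero.mp hz
  · have hz : φ a - a • φ 1 = 0 := by
      apply hM
      intro x hx
      obtain ⟨m1, _, m3⟩ := main x hx
      rw [smul_sub, smul_sub, m1, m3, sub_self]
    exact sub_eq_zero.mp hz
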